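/- Cut-bending theorem (difference form): Let X be a minimum x-y-cut side in G with x ∈ X and b, d ∉ X. Let U be any set separating b and d with x ∉ U (U does not separate x,y when also y ∉ U). Then cost_{c⁻}(U \ X) ≤ cost_{c⁻}(U). -/

import Mathlib

open Finset

variable {V : Type*}

/-- Cost of the cut given by side `S`: sum of costs of ordered pairs crossing the cut. -/
def cutCost [Fintype V] [DecidableEq V] (c : V → V → NNReal) (S : Finset V) : NNReal :=
  ∑ x ∈ S, ∑ y ∈ Sᶜ, c x y

/-- Minimum `u`-`v`-cut value. -/
noncomputable def minCut [Fintype V] [DecidableEq V] (c : V → V → NNReal) (u v : V) : NNReal :=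
  sInf {w : NNReal | ∃ S : Finset V, u ∈ S ∧ v ∉ S ∧ cutCost c S = w}

lemma cutCost_eq [Fintype V] [DecidableEq V] (c : V → V → NNReal) (S : Finset V) :
    cutCost c S = ∑ u : V, ∑ v : V, if u ∈ S ∧ v ∉ S then c u v else 0 := by
  classical
  unfold cutCost
  have h1 : ∀ u : V, ∑ v ∈ Sᶜ, c u v = ∑ v : V, if v ∉ S then c u v else 0 := by
    intro u
    rw [← Finset.sum_filter]
    congr 1
    ext v; simp
  have h2 : ∑ u : V, ∑ v : V, (if u ∈ S ∧ v ∉ S then c u v else 0)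
      = ∑ u : V, (if u ∈ S then ∑ v : V, (if v ∉ S then c u v else 0) else 0) := by
    refine Finset.sum_congr rfl fun u _ => ?_
    by_cases hu : u ∈ S
    · simp [hu]
    · simp [hu]
  rw [h2, ← Finset.sum_filter]
  have h3 : Finset.univ.filter (· ∈ S) = S := by ext u; simp
  rw [h3]
  exact Finset.sum_congr rfl fun u _ => h1 u

lemma cutCost_double [Fintype V] [DecidableEq V] (c : V → V → NNReal)
    (hsymm : ∀ x y, c x y = c y x) (S : Finset V) :
    cutCost c S + cutCost c S =
      ∑ u : V, ∑ v : V, ((if u ∈ S ∧ v ∉ S then c u v else 0) +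
        (if v ∈ S ∧ u ∉ S then c u v else 0)) := by
  classical
  have h2 : cutCost c S = ∑ u : V, ∑ v : V, (if v ∈ S ∧ u ∉ S then c u v else 0) := by
    rw [Finset.sum_comm]
    have := cutCost_eq (fun a b => c b a) S
    rw [show cutCost (fun a b => c b a) S = cutCost c S from ?_] at this
    · exact this
    · unfold cutCost
      exact Finset.sum_congr rfl fun u _ => Finset.sum_congr rfl fun v _ => (hsymm u v).symm
  rw [show (∑ u : V, ∑ v : V, ((if u ∈ S ∧ v ∉ S then c u v else 0) +
        (if v ∈ S ∧ u ∉ S then c u v else 0)))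
      = (∑ u : V, ∑ v : V, (if u ∈ S ∧ v ∉ S then c u v else 0)) +
        (∑ u : V, ∑ v : V, (if v ∈ S ∧ u ∉ S then c u v else 0)) from by
    rw [← Finset.sum_add_distrib]
    exact Finset.sum_congr rfl fun u _ => Finset.sum_add_distrib,
    ← cutCost_eq c S, ← h2]

lemma posimod [Fintype V] [DecidableEq V] (c : V → V → NNReal)
    (hsymm : ∀ x y, c x y = c y x) (U X : Finset V) :
    cutCost c (U \ X) + cutCost c (X \ U) ≤ cutCost c U + cutCost c X := by
  classical
  have H : (cutCost c (U \ X) + cutCost c (U \ X)) + (cutCost c (X \ U) + cutCost c (X \ U)) ≤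
      (cutCost c U + cutCost c U) + (cutCost c X + cutCost c X) := by
    rw [cutCost_double c hsymm (U \ X), cutCost_double c hsymm (X \ U),
      cutCost_double c hsymm U, cutCost_double c hsymm X,
      ← Finset.sum_add_distrib, ← Finset.sum_add_distrib]
    refine Finset.sum_le_sum fun u _ => ?_
    rw [← Finset.sum_add_distrib, ← Finset.sum_add_distrib]
    refine Finset.sum_le_sum fun v _ => ?_
    by_cases hu1 : u ∈ U <;> by_cases hu2 : u ∈ X <;>
      by_cases hv1 : v ∈ U <;> by_cases hv2 : v ∈ X <;>
      simp [Finset.mem_sdiff, hu1, hu2, hv1, hv2, hsymm u v, add_comm]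
  rcases le_or_gt (cutCost c (U \ X) + cutCost c (X \ U)) (cutCost c U + cutCost c X) with h | h
  · exact h
  · exfalso
    have := add_lt_add h h
    apply absurd this
    push_neg
    calc (cutCost c (U \ X) + cutCost c (X \ U)) + (cutCost c (U \ X) + cutCost c (X \ U))
        = (cutCost c (U \ X) + cutCost c (U \ X)) + (cutCost c (X \ U) + cutCost c (X \ U)) := by
          ring
      _ ≤ (cutCost c U + cutCost c U) + (cutCost c X + cutCost c X) := H
      _ = (cutCost c U + cutCost c X) + (cutCost c U + cutCost c X) := by ring

lemma cost_shift [Fintype V] [DecidableEq V] (c cm : V → V → NNReal) (Δ : NNReal) (p q : V)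
    (hagree : ∀ u v, ¬((u = p ∧ v = q) ∨ (u = q ∧ v = p)) → cm u v = c u v)
    (hpq : c p q = cm p q + Δ)
    (S : Finset V) (hp : p ∈ S) (hq : q ∉ S) :
    cutCost c S = cutCost cm S + Δ := by
  classical
  unfold cutCost
  have step : ∑ u ∈ S, ∑ v ∈ Sᶜ, c u v =
      ∑ u ∈ S, ∑ v ∈ Sᶜ, (cm u v + (if u = p ∧ v = q then Δ else 0)) := by
    refine Finset.sum_congr rfl fun u hu => Finset.sum_congr rfl fun v hv => ?_
    by_cases h : u = p ∧ v = q
    · rw [if_pos h, h.1, h.2, hpq]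
    · rw [hagree u v, if_neg h, add_zero]
      rintro (h' | h')
      · exact h h'
      · exact hq (h'.1 ▸ hu)
  rw [step]
  have ind : ∑ u ∈ S, ∑ v ∈ Sᶜ, (if u = p ∧ v = q then Δ else 0) = Δ := by
    have inner : ∀ u ∈ S, ∑ v ∈ Sᶜ, (if u = p ∧ v = q then Δ else 0)
        = (if u = p then Δ else 0) := by
      intro u _
      by_cases h : u = p
      · subst h
        rw [if_pos rfl]
        simp only [eq_self_iff_true, true_and]
        rw [Finset.sum_ite_eq' Sᶜ q (fun _ => Δ), if_pos (Finset.mem_compl.2 hq)]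
      · simp [h]
    rw [Finset.sum_congr rfl inner, Finset.sum_ite_eq' S p (fun _ => Δ), if_pos hp]
  calc ∑ u ∈ S, ∑ v ∈ Sᶜ, (cm u v + (if u = p ∧ v = q then Δ else 0))
      = ∑ u ∈ S, (∑ v ∈ Sᶜ, cm u v + ∑ v ∈ Sᶜ, (if u = p ∧ v = q then Δ else 0)) :=
        Finset.sum_congr rfl fun u _ => Finset.sum_add_distrib
    _ = ∑ u ∈ S, ∑ v ∈ Sᶜ, cm u v + ∑ u ∈ S, ∑ v ∈ Sᶜ, (if u = p ∧ v = q then Δ else 0) :=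
        Finset.sum_add_distrib
    _ = ∑ u ∈ S, ∑ v ∈ Sᶜ, cm u v + Δ := by rw [ind]

theorem cut_bending_diff [Fintype V] [DecidableEq V] (c cm : V → V → NNReal)
    (hsymm : ∀ x y, c x y = c y x) (b d : V) (hbd : b ≠ d)
    (Δ : NNReal) (hΔpos : 0 < Δ) (hΔ : Δ ≤ c b d)
    (h_agree : ∀ x y : V, ¬((x = b ∧ y = d) ∨ (x = d ∧ y = b)) → cm x y = c x y)
    (h_bd : cm b d = c b d - Δ) (h_db : cm d b = c b d - Δ)
    (x y : V) (X : Finset V) (hxX : x ∈ X) (hyX : y ∉ X) (hbX : b ∉ X) (hdX : d ∉ X)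
    (hXmin : cutCost c X = minCut c x y)
    (U : Finset V) (hUsep : Xor' (b ∈ U) (d ∈ U)) (hxU : x ∉ U) (hyU : y ∉ U) :
    cutCost cm (U \ X) ≤ cutCost cm U := by
  classical
  -- Step 1: minimality gives cutCost c X ≤ cutCost c (X \ U)
  have hXU_cut : cutCost c X ≤ cutCost c (X \ U) := by
    rw [hXmin]
    exact csInf_le (OrderBot.bddBelow _)
      ⟨X \ U, Finset.mem_sdiff.2 ⟨hxX, hxU⟩, fun h => hyX (Finset.mem_sdiff.1 h).1, rfl⟩
  -- Step 2: posimodularity gives cutCost c (U \ X) ≤ cutCost c U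
  have hc : cutCost c (U \ X) ≤ cutCost c U := by
    have H := posimod c hsymm U X
    have H2 : cutCost c (U \ X) + cutCost c X ≤ cutCost c U + cutCost c X :=
      le_trans (add_le_add_right hXU_cut _) H
    exact le_of_add_le_add_right H2
  -- Step 3: transfer to cm
  have hbdagree : ∀ u v, ¬((u = b ∧ v = d) ∨ (u = d ∧ v = b)) → cm u v = c u v := h_agree
  have hdbagree : ∀ u v, ¬((u = d ∧ v = b) ∨ (u = b ∧ v = d)) → cm u v = c u v := by
    intro u v h; exact h_agree u v (fun h' => h h'.symm)
  have hcbd : c b d = cm b d + Δ := by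
    rw [h_bd, tsub_add_cancel_of_le hΔ]
  have hcdb : c d b = cm d b + Δ := by
    rw [h_db, ← hsymm b d]
    exact (tsub_add_cancel_of_le hΔ).symm
  have shift : ∀ S : Finset V, Xor' (b ∈ S) (d ∈ S) → cutCost c S = cutCost cm S + Δ := by
    intro S hS
    rcases hS with ⟨hb, hd⟩ | ⟨hd, hb⟩
    · exact cost_shift c cm Δ b d hbdagree hcbd S hb hd
    · exact cost_shift c cm Δ d b hdbagree hcdb S hd hb
  have hsepU : Xor' (b ∈ U) (d ∈ U) := hUsep
  have hsepUX : Xor' (b ∈ U \ X) (d ∈ U \ X) := by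
    have hb : (b ∈ U \ X) ↔ (b ∈ U) := by simp [Finset.mem_sdiff, hbX]
    have hd : (d ∈ U \ X) ↔ (d ∈ U) := by simp [Finset.mem_sdiff, hdX]
    rcases hUsep with ⟨h1, h2⟩ | ⟨h1, h2⟩
    · exact Or.inl ⟨hb.2 h1, fun h => h2 (hd.1 h)⟩
    · exact Or.inr ⟨hd.2 h1, fun h => h2 (hb.1 h)⟩
  have e1 := shift (U \ X) hsepUX
  have e2 := shift U hsepU
  have : cutCost cm (U \ X) + Δ ≤ cutCost cm U + Δ := by
    rw [← e1, ← e2]; exact hc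
  exact le_of_add_le_add_right this
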